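/- The reduction from 3-SAT to egalitarian welfare with two projects is correct: a 3-CNF formula F with α variables and κ clauses is satisfiable if and only if the associated temporal election instance (with κ agents, 2 projects, α timesteps) admits an outcome giving every agent utility at least 1. -/
import Mathlib


/-- The utility of agent `i` under outcome `o`. -/
noncomputable def util {P : Type*} {n ℓ : ℕ}
    (S : Fin n → Fin ℓ → Finset P) (i : Fin n) (o : Fin ℓ → P) : ℕ :=
  Nat.card {t : Fin ℓ // o t ∈ S i t}

/-- Correctness of the 3-SAT reduction: a CNF formula `M` over `α` variables with
`κ` clauses (each clause a set of literals `(variable, polarity)` with no clause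
containing a variable with both polarities) is satisfiable iff the associated
temporal election instance — `κ` agents, two projects (`true` = τ, `false` = φ),
`α` timesteps, where agent `i` approves `{τ}` at timestep `t` if `x_t ∈ M_i`,
`{φ}` if `¬x_t ∈ M_i`, and `∅` otherwise — admits an outcome giving every agent
utility at least 1. -/
theorem threeSat_reduction (α κ : ℕ)
    (M : Fin κ → Finset (Fin α × Bool))
    (hM : ∀ (i : Fin κ) (t : Fin α), ¬((t, true) ∈ M i ∧ (t, false) ∈ M i))
    (S : Fin κ → Fin α → Finset Bool)
    (hS : ∀ (i : Fin κ) (t : Fin α), S i t =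
      if (t, true) ∈ M i then {true}
      else if (t, false) ∈ M i then {false} else ∅) :
    (∃ A : Fin α → Bool, ∀ i : Fin κ, ∃ l ∈ M i, A l.1 = l.2) ↔
      (∃ o : Fin α → Bool, ∀ i : Fin κ, 1 ≤ util S i o) := by
  have key : ∀ (i : Fin κ) (o : Fin α → Bool) (t : Fin α),
      o t ∈ S i t ↔ (t, o t) ∈ M i := by
    intro i o t
    rw [hS]
    by_cases h1 : (t, true) ∈ M i <;> by_cases h2 : (t, false) ∈ M i <;>
      (try exact (hM i t ⟨h1, h2⟩).elim) <;> simp [h1, h2] <;> cases h : o t <;> simp_all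
  have hcard : ∀ (i : Fin κ) (o : Fin α → Bool),
      1 ≤ util S i o ↔ ∃ t, o t ∈ S i t := by
    intro i o
    unfold util
    rw [Nat.one_le_iff_ne_zero, ← Nat.pos_iff_ne_zero, Nat.card_pos_iff]
    constructor
    · rintro ⟨⟨⟨t, ht⟩⟩, -⟩; exact ⟨t, ht⟩
    · rintro ⟨t, ht⟩; exact ⟨⟨⟨t, ht⟩⟩, inferInstance⟩
  constructor
  · rintro ⟨A, hA⟩
    refine ⟨A, fun i => (hcard i A).2 ?_⟩
    obtain ⟨⟨t, b⟩, hl, hb⟩ := hA i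
    exact ⟨t, (key i A t).2 (by simpa [hb] using hl)⟩
  · rintro ⟨o, ho⟩
    refine ⟨o, fun i => ?_⟩
    obtain ⟨t, ht⟩ := (hcard i o).1 (ho i)
    exact ⟨(t, o t), (key i o t).1 ht, rfl⟩
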